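/- Let w ∈ ℝ² with height |w| = w₂ > 0, and u, v ∈ ℝ² with positive heights such that |u × v| = 1 and sin∠(u,w) < C/(|u|·Q) and |v| < Q/C for some C, Q > 0. Then sin∠(v,w) ≤ sin∠(u,v) + sin∠(u,w) < 2 sin∠(u,v), and hence |w × v| = |w||v| sin∠(v,w) < 2|w||v| sin∠(u,v) = 2|w|/|u|. -/

import Mathlib

open InnerProductGeometry

private lemma cross_abs (a b : EuclideanSpace ℝ (Fin 2)) :
    Real.sin (angle a b) * (‖a‖ * ‖b‖) = |a 0 * b 1 - a 1 * b 0| := by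
  rw [sin_angle_mul_norm_mul_norm]
  have h : inner ℝ a a * inner ℝ b b - inner ℝ a b * inner ℝ a b
      = (a 0 * b 1 - a 1 * b 0) ^ 2 := by
    simp only [PiLp.inner_apply, RCLike.inner_apply, conj_trivial, Fin.sum_univ_two]
    ring
  rw [h, Real.sqrt_sq_eq_abs]

private lemma sin_eq (a b : EuclideanSpace ℝ (Fin 2)) (ha : a ≠ 0) (hb : b ≠ 0) :
    Real.sin (angle a b) = |a 0 * b 1 - a 1 * b 0| / (‖a‖ * ‖b‖) := by
  have hna : 0 < ‖a‖ := norm_pos_iff.mpr ha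
  have hnb : 0 < ‖b‖ := norm_pos_iff.mpr hb
  field_simp [← cross_abs a b]
  linarith [cross_abs a b]

private lemma cross_tri (u v w : EuclideanSpace ℝ (Fin 2)) :
    |v 0 * w 1 - v 1 * w 0| * ‖u‖ ≤
      |u 0 * w 1 - u 1 * w 0| * ‖v‖ + |u 0 * v 1 - u 1 * v 0| * ‖w‖ := by
  have hid : (v 0 * w 1 - v 1 * w 0) • u
      = (u 0 * w 1 - u 1 * w 0) • v - (u 0 * v 1 - u 1 * v 0) • w := by
    ext i
    fin_cases i <;> simp [PiLp.smul_apply] <;> ring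
  calc |v 0 * w 1 - v 1 * w 0| * ‖u‖ = ‖(v 0 * w 1 - v 1 * w 0) • u‖ := by
        rw [norm_smul, Real.norm_eq_abs]
    _ ≤ ‖(u 0 * w 1 - u 1 * w 0) • v‖ + ‖(u 0 * v 1 - u 1 * v 0) • w‖ := by
        rw [hid]; exact norm_sub_le _ _
    _ = _ := by rw [norm_smul, norm_smul, Real.norm_eq_abs, Real.norm_eq_abs]

/-- Angle comparison for planar vectors: if `|u × v| = 1`, `sin∠(u,w) < C/(‖u‖·Q)` and
`‖v‖ < Q/C`, then `sin∠(v,w) ≤ sin∠(u,v) + sin∠(u,w) < 2 sin∠(u,v)` and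
`|w × v| < 2‖w‖/‖u‖`. -/
theorem sin_angle_triangle_cross_bound
    (u v w : EuclideanSpace ℝ (Fin 2))
    (hu : u ≠ 0) (hv : v ≠ 0) (hw : w ≠ 0)
    (C Q : ℝ) (hC : 0 < C) (hQ : 0 < Q)
    (huv : |u 0 * v 1 - u 1 * v 0| = 1)
    (huw : Real.sin (angle u w) < C / (‖u‖ * Q))
    (hvQ : ‖v‖ < Q / C) :
    Real.sin (angle v w) ≤ Real.sin (angle u v) + Real.sin (angle u w) ∧
    Real.sin (angle v w) < 2 * Real.sin (angle u v) ∧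
    |w 0 * v 1 - w 1 * v 0| < 2 * ‖w‖ / ‖u‖ := by
  have hnu : 0 < ‖u‖ := norm_pos_iff.mpr hu
  have hnv : 0 < ‖v‖ := norm_pos_iff.mpr hv
  have hnw : 0 < ‖w‖ := norm_pos_iff.mpr hw
  have hsvw := sin_eq v w hv hw
  have hsuv := sin_eq u v hu hv
  have hsuw := sin_eq u w hu hw
  have htri := cross_tri u v w
  have h1 : Real.sin (angle v w) ≤ Real.sin (angle u v) + Real.sin (angle u w) := by
    rw [hsvw, hsuv, hsuw, div_add_div _ _ (by positivity) (by positivity),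
      div_le_div_iff₀ (by positivity) (by positivity)]
    nlinarith [mul_le_mul_of_nonneg_right htri
      (show (0:ℝ) ≤ ‖u‖ * ‖v‖ * ‖w‖ by positivity)]
  -- sin∠(u,w) < sin∠(u,v)
  have hkey : Real.sin (angle u w) < Real.sin (angle u v) := by
    have h2 : C / (‖u‖ * Q) < 1 / (‖u‖ * ‖v‖) := by
      rw [div_lt_div_iff₀ (by positivity) (by positivity)]
      have : ‖v‖ * C < Q := by
        have := (lt_div_iff₀ hC).mp hvQ; linarith
      nlinarith
    rw [hsuv, huv]
    exact huw.trans h2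
  have h2 : Real.sin (angle v w) < 2 * Real.sin (angle u v) := by linarith
  refine ⟨h1, h2, ?_⟩
  have habs : |w 0 * v 1 - w 1 * v 0| = |v 0 * w 1 - v 1 * w 0| := by
    rw [← abs_neg]; ring_nf
  have hcvw : |v 0 * w 1 - v 1 * w 0| = Real.sin (angle v w) * (‖v‖ * ‖w‖) :=
    (cross_abs v w).symm
  have hlt : Real.sin (angle v w) * (‖v‖ * ‖w‖) < 2 * Real.sin (angle u v) * (‖v‖ * ‖w‖) :=
    mul_lt_mul_of_pos_right h2 (by positivity)
  have heq : 2 * Real.sin (angle u v) * (‖v‖ * ‖w‖) = 2 * ‖w‖ / ‖u‖ := by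
    rw [hsuv, huv]; field_simp
  rw [habs, hcvw, ← heq]
  exact hlt
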